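/- Let V be a free abelian group and let a1, a2 be two distinct elements of a basis of V. Then the map from the exterior algebra of V/(a1 - a2) to the exterior algebra of V sending a class [w] to (a1 - a2) ∧ w (for any lift w of [w]) is a well-defined injective group homomorphism. -/

import Mathlib

open ExteriorAlgebra

section aux
variable {R M : Type*} [CommRing R] [AddCommGroup M] [Module R M]

lemma ext_ι_mul_comm (d : M) (x : ExteriorAlgebra R M) :
    ExteriorAlgebra.ι R d * x = CliffordAlgebra.involute x * ExteriorAlgebra.ι R d := by
  induction x using CliffordAlgebra.induction with
  | algebraMap r => rw [CliffordAlgebra.involute.commutes, Algebra.commutes]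
  | ι m =>
      rw [CliffordAlgebra.involute_ι, neg_mul, eq_neg_iff_add_eq_zero]
      exact ι_add_mul_swap d m
  | add x y hx hy => rw [mul_add, map_add, add_mul, hx, hy]
  | mul x y hx hy => rw [map_mul, ← mul_assoc, hx, mul_assoc, hy, mul_assoc]
end aux

/-- Let `V` be a free abelian group with basis `b`, and `a1 = b i`,
`a2 = b j` two distinct basis elements.  The map from the exterior algebra (over ℤ) of
`V ⧸ (a1 - a2)` to the exterior algebra of `V` sending the class of `w` to
`(a1 - a2) ∧ w` is a well-defined injective group homomorphism.  Well-definedness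
is expressed by the existence of an additive (ℤ-linear) map `F` satisfying
`F [w] = (a1 - a2) ∧ w` for every lift `w` (the quotient algebra map being
surjective, this determines `F` on everything). -/
theorem stmt0 {ι V : Type*} [AddCommGroup V]
    (b : Module.Basis ι ℤ V) (i j : ι) (hij : i ≠ j) :
    ∃ F : ExteriorAlgebra ℤ (V ⧸ AddSubgroup.zmultiples (b i - b j)) →ₗ[ℤ]
        ExteriorAlgebra ℤ V,
      Function.Injective F ∧
      ∀ w : ExteriorAlgebra ℤ V,
        F (ExteriorAlgebra.map
            (QuotientAddGroup.mk' (AddSubgroup.zmultiples (b i - b j))).toIntLinearMap w) =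
          ExteriorAlgebra.ι ℤ (b i - b j) * w := by
  obtain ⟨d, hd⟩ : ∃ d : V, d = b i - b j := ⟨_, rfl⟩
  rw [← hd]
  set S := AddSubgroup.zmultiples d with hS
  set f : V →ₗ[ℤ] ℤ := b.coord i with hf
  have hfd : f d = 1 := by
    simp [hf, hd, Module.Basis.coord_apply, Finsupp.single_apply, hij.symm]
  set g : V →ₗ[ℤ] V := LinearMap.id - LinearMap.smulRight f d with hg
  have hgv : ∀ v, g v = v - f v • d := fun v => rfl
  have hgd : ∀ x ∈ S, g.toAddMonoidHom x = 0 := by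
    rintro x ⟨n, rfl⟩
    show g (n • d) = 0
    rw [map_zsmul, hgv, hfd, one_smul, sub_self, smul_zero]
  set πₗ : V →ₗ[ℤ] (V ⧸ S) := (QuotientAddGroup.mk' S).toIntLinearMap with hπ
  set gbar : (V ⧸ S) →ₗ[ℤ] V := (QuotientAddGroup.lift S g.toAddMonoidHom hgd).toIntLinearMap
    with hgbar
  have hcomp : gbar ∘ₗ πₗ = g := by ext v; rfl
  have hπd : πₗ d = 0 := by
    show ((QuotientAddGroup.mk' S) d : V ⧸ S) = 0
    rw [QuotientAddGroup.mk'_apply, QuotientAddGroup.eq_zero_iff]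
    exact AddSubgroup.mem_zmultiples d
  have hπgbar : πₗ ∘ₗ gbar = LinearMap.id := by
    refine LinearMap.ext fun x => ?_
    obtain ⟨v, rfl⟩ := QuotientAddGroup.mk'_surjective S x
    show πₗ (g v) = _
    rw [hgv, map_sub, map_smul, hπd, smul_zero, sub_zero]
    rfl
  set L : ExteriorAlgebra ℤ V →ₗ[ℤ] ExteriorAlgebra ℤ V :=
    LinearMap.mulLeft ℤ (ExteriorAlgebra.ι ℤ d) with hL
  set F : ExteriorAlgebra ℤ (V ⧸ S) →ₗ[ℤ] ExteriorAlgebra ℤ V :=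
    L ∘ₗ (ExteriorAlgebra.map gbar).toLinearMap with hF
  -- key: multiplying by ι d erases the difference between `map g w` and `w`
  have key : ∀ w : ExteriorAlgebra ℤ V,
      ExteriorAlgebra.ι ℤ d * ExteriorAlgebra.map g w = ExteriorAlgebra.ι ℤ d * w := by
    intro w
    induction w using CliffordAlgebra.induction with
    | algebraMap r => rw [AlgHom.commutes]
    | ι m =>
        have h1 : ExteriorAlgebra.map g (ExteriorAlgebra.ι ℤ m)
            = ExteriorAlgebra.ι ℤ m - f m • ExteriorAlgebra.ι ℤ d := by
          rw [ExteriorAlgebra.map_apply_ι, hgv,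
            (ExteriorAlgebra.ι ℤ (M := V)).map_sub, (ExteriorAlgebra.ι ℤ (M := V)).map_smul]
        rw [h1, mul_sub, mul_smul_comm, ExteriorAlgebra.ι_sq_zero, smul_zero, sub_zero]
    | add x y hx hy => rw [map_add, mul_add, mul_add, hx, hy]
    | mul x y hx hy =>
        have hx' : CliffordAlgebra.involute (ExteriorAlgebra.map g x) * ExteriorAlgebra.ι ℤ d
            = CliffordAlgebra.involute x * ExteriorAlgebra.ι ℤ d := by
          rw [← ext_ι_mul_comm, ← ext_ι_mul_comm, hx]
        rw [map_mul, ← mul_assoc, ext_ι_mul_comm d ((ExteriorAlgebra.map g) x), mul_assoc, hy,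
          ← mul_assoc, hx', ← ext_ι_mul_comm d x, mul_assoc]
  refine ⟨F, ?_, ?_⟩
  · -- injectivity via the explicit left inverse `map πₗ ∘ (f ⌋ ·)`
    set C : ExteriorAlgebra ℤ V →ₗ[ℤ] ExteriorAlgebra ℤ V :=
      CliffordAlgebra.contractLeft (Q := (0 : QuadraticForm ℤ V)) f with hC
    have hGF : ∀ x, ExteriorAlgebra.map πₗ (C (F x)) = x := by
      intro x
      have hFx : F x = ExteriorAlgebra.ι ℤ d * ExteriorAlgebra.map gbar x := rfl
      have hCF : C (F x) = ExteriorAlgebra.map gbar x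
          - ExteriorAlgebra.ι ℤ d * C (ExteriorAlgebra.map gbar x) := by
        rw [hFx, hC, CliffordAlgebra.contractLeft_ι_mul, hfd, one_smul]
      rw [hCF, map_sub, map_mul, ExteriorAlgebra.map_apply_ι, hπd, map_zero, zero_mul, sub_zero,
        ← AlgHom.comp_apply, ExteriorAlgebra.map_comp_map, hπgbar, ExteriorAlgebra.map_id,
        AlgHom.id_apply]
    exact Function.LeftInverse.injective (g := fun y => ExteriorAlgebra.map πₗ (C y)) hGF
  · intro w
    have h1 : ExteriorAlgebra.map gbar (ExteriorAlgebra.map πₗ w) = ExteriorAlgebra.map g w := by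
      rw [← AlgHom.comp_apply, ExteriorAlgebra.map_comp_map, hcomp]
    show ExteriorAlgebra.ι ℤ d * ExteriorAlgebra.map gbar (ExteriorAlgebra.map πₗ w)
        = ExteriorAlgebra.ι ℤ d * w
    rw [h1, key]
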